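/- arXiv:math/0502139 — 3 statements merged into one kernel-verified Lean document; each statement's English description precedes it below -/
import Mathlib

section
/- Let c₁, c₂ ∈ ℂ and r₁, r₂ > 0 with (c₁, r₁) ≠ (c₂, r₂), and suppose |c₁ − c₂| > |r₁ − r₂|. For j = 1,2 define X_j = {(z,w) ∈ ℂ² : (z − c_j)(w − conj(c_j)) = r_j² and |z − c_j| ≤ r_j}. Then X₁ ∩ X₂ = {(z, conj(z)) : z ∈ ℂ, |z − c₁| = r₁ and |z − c₂| = r₂}; in particular X₁ ∩ X₂ is contained in the totally real plane Σ = {(z,w) ∈ ℂ² : w = conj(z)}. -/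
open Complex

private lemma aux_contra (r₁ r₂ d p q : ℝ) (hd : |r₁ - r₂| < d) (hq : 0 < q)
    (hp : p = q + d) (hpr : p < r₁) (hqr : q < r₂)
    (hrel : q * r₁ ^ 2 - p * r₂ ^ 2 = p * q * d) : False := by
  have hd0 : 0 < d := lt_of_le_of_lt (abs_nonneg _) hd
  have h2 := (abs_lt.mp hd).2
  subst hp
  have key : q * (r₁ ^ 2 - (r₂ + d) ^ 2) = d * (q - r₂) ^ 2 := by
    linear_combination hrel
  have hr1pos : 0 < r₁ := by linarith
  have hsq : (r₂ + d) ^ 2 ≤ r₁ ^ 2 := by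
    nlinarith [key, sq_nonneg (q - r₂), mul_pos hq hd0]
  have hle : r₂ + d ≤ r₁ := by nlinarith [hsq]
  linarith

set_option maxHeartbeats 2000000 in
/-- Lemma 1: the complexifications of two distinct circles, neither contained in
the closed disc bounded by the other, intersect only over the common points of
the circles, lifted to the totally real plane `Σ = {w = conj z}`. -/
theorem complexified_circles_intersection
    (c₁ c₂ : ℂ) (r₁ r₂ : ℝ) (hr₁ : 0 < r₁) (hr₂ : 0 < r₂)
    (hne : (c₁, r₁) ≠ (c₂, r₂))
    (h : ‖c₁ - c₂‖ > |r₁ - r₂|)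
    (X₁ X₂ : Set (ℂ × ℂ))
    (hX₁ : X₁ = {p : ℂ × ℂ |
      (p.1 - c₁) * (p.2 - (starRingEnd ℂ) c₁) = (r₁ : ℂ) ^ 2 ∧
      ‖p.1 - c₁‖ ≤ r₁})
    (hX₂ : X₂ = {p : ℂ × ℂ |
      (p.1 - c₂) * (p.2 - (starRingEnd ℂ) c₂) = (r₂ : ℂ) ^ 2 ∧
      ‖p.1 - c₂‖ ≤ r₂}) :
    X₁ ∩ X₂ = {p : ℂ × ℂ | ∃ z : ℂ, p = (z, (starRingEnd ℂ) z) ∧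
      ‖z - c₁‖ = r₁ ∧ ‖z - c₂‖ = r₂} ∧
    X₁ ∩ X₂ ⊆ {p : ℂ × ℂ | p.2 = (starRingEnd ℂ) p.1} := by
  subst hX₁ hX₂
  have hd0 : 0 < ‖c₁ - c₂‖ := lt_of_le_of_lt (abs_nonneg _) h
  have key : ({p : ℂ × ℂ |
      (p.1 - c₁) * (p.2 - (starRingEnd ℂ) c₁) = (r₁ : ℂ) ^ 2 ∧
      ‖p.1 - c₁‖ ≤ r₁} ∩ {p : ℂ × ℂ |
      (p.1 - c₂) * (p.2 - (starRingEnd ℂ) c₂) = (r₂ : ℂ) ^ 2 ∧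
      ‖p.1 - c₂‖ ≤ r₂}) = {p : ℂ × ℂ | ∃ z : ℂ,
      p = (z, (starRingEnd ℂ) z) ∧
      ‖z - c₁‖ = r₁ ∧ ‖z - c₂‖ = r₂} := by
    ext ⟨z, w⟩
    simp only [Set.mem_inter_iff, Set.mem_setOf_eq]
    constructor
    · rintro ⟨⟨h1, h1b⟩, ⟨h2, h2b⟩⟩
      have hz1 : z - c₁ ≠ 0 := by
        intro hz
        rw [hz, zero_mul] at h1
        have : (r₁ : ℂ) ^ 2 ≠ 0 :=
          pow_ne_zero 2 (Complex.ofReal_ne_zero.mpr hr₁.ne')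
        exact this h1.symm
      have hz2 : z - c₂ ≠ 0 := by
        intro hz
        rw [hz, zero_mul] at h2
        have : (r₂ : ℂ) ^ 2 ≠ 0 :=
          pow_ne_zero 2 (Complex.ofReal_ne_zero.mpr hr₂.ne')
        exact this h2.symm
      set s : ℝ := r₁ ^ 2 - Complex.normSq (z - c₁) with hs_def
      set t : ℝ := r₂ ^ 2 - Complex.normSq (z - c₂) with ht_def
      have hp2 : Complex.normSq (z - c₁) = ‖z - c₁‖ ^ 2 :=
        (Complex.sq_norm _).symm
      have hq2 : Complex.normSq (z - c₂) = ‖z - c₂‖ ^ 2 :=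
        (Complex.sq_norm _).symm
      have hs0 : 0 ≤ s := by
        rw [hs_def, hp2]
        nlinarith [norm_nonneg (z - c₁)]
      have ht0 : 0 ≤ t := by
        rw [ht_def, hq2]
        nlinarith [norm_nonneg (z - c₂)]
      have e1 : (z - c₁) * (w - (starRingEnd ℂ) z) = (s : ℂ) := by
        have : (z - c₁) * (w - (starRingEnd ℂ) z)
            = (z - c₁) * (w - (starRingEnd ℂ) c₁)
              - (z - c₁) * (starRingEnd ℂ) (z - c₁) := by
          rw [map_sub]; ring
        rw [this, h1, Complex.mul_conj, hs_def]
        push_cast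
        ring
      have e2 : (z - c₂) * (w - (starRingEnd ℂ) z) = (t : ℂ) := by
        have : (z - c₂) * (w - (starRingEnd ℂ) z)
            = (z - c₂) * (w - (starRingEnd ℂ) c₂)
              - (z - c₂) * (starRingEnd ℂ) (z - c₂) := by
          rw [map_sub]; ring
        rw [this, h2, Complex.mul_conj, ht_def]
        push_cast
        ring
      have cross : (s : ℂ) * (z - c₂) = (t : ℂ) * (z - c₁) := by
        rw [← e1, ← e2]; ring
      -- main claim: s = 0 and t = 0
      have hst : s = 0 ∧ t = 0 := by
        by_contra hcon
        -- first, neither can vanish alone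
        have hs_ne : s ≠ 0 := by
          intro hs
          rw [hs] at hcon
          have ht : t ≠ 0 := by tauto
          rw [hs] at cross
          simp only [Complex.ofReal_zero, zero_mul] at cross
          rcases mul_eq_zero.mp cross.symm with h' | h'
          · exact ht (by exact_mod_cast h')
          · exact hz1 h'
        have ht_ne : t ≠ 0 := by
          intro ht
          rw [ht] at cross
          simp only [Complex.ofReal_zero, zero_mul] at cross
          rcases mul_eq_zero.mp cross with h' | h'
          · exact hs_ne (by exact_mod_cast h')
          · exact hz2 h'
        have hs_pos : 0 < s := lt_of_le_of_ne hs0 (Ne.symm hs_ne)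
        have ht_pos : 0 < t := lt_of_le_of_ne ht0 (Ne.symm ht_ne)
        set p : ℝ := ‖z - c₁‖ with hp_def
        set q : ℝ := ‖z - c₂‖ with hq_def
        set d : ℝ := ‖c₁ - c₂‖ with hd_def
        have hp_pos : 0 < p := by
          rw [hp_def]; exact norm_pos_iff.mpr hz1
        have hq_pos : 0 < q := by
          rw [hq_def]; exact norm_pos_iff.mpr hz2
        -- from cross: s * q = t * p
        have habs1 : s * q = t * p := by
          have := congrArg norm cross
          simpa [norm_mul, Complex.norm_real, Real.norm_eq_abs, abs_of_pos hs_pos,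
            abs_of_pos ht_pos, hp_def, hq_def] using this
        -- s (c₁ - c₂) = (t - s)(z - c₁)
        have ecross1 : (s : ℂ) * (c₁ - c₂) = ((t : ℂ) - s) * (z - c₁) := by
          linear_combination cross
        have ecross2 : (t : ℂ) * (c₁ - c₂) = ((t : ℂ) - s) * (z - c₂) := by
          linear_combination cross
        have habs2 : s * d = |t - s| * p := by
          have := congrArg norm ecross1
          simpa [norm_mul, Complex.norm_real, Real.norm_eq_abs, abs_of_pos hs_pos,
            ← Complex.ofReal_sub, hp_def, hd_def] using this
        have habs3 : t * d = |t - s| * q := by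
          have := congrArg norm ecross2
          simpa [norm_mul, Complex.norm_real, Real.norm_eq_abs, abs_of_pos ht_pos,
            ← Complex.ofReal_sub, hq_def, hd_def] using this
        have hst_ne : s ≠ t := by
          intro hst
          rw [hst, sub_self, abs_zero, zero_mul] at habs2
          nlinarith
        -- the circle-equation relation
        have hrel : q * r₁ ^ 2 - p * r₂ ^ 2 = p * q * (p - q) := by
          have hs' : s = r₁ ^ 2 - p ^ 2 := by rw [hs_def, hp2, hp_def]
          have ht' : t = r₂ ^ 2 - q ^ 2 := by rw [ht_def, hq2, hq_def]
          rw [hs', ht'] at habs1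
          nlinarith [habs1]
        have hpr : p < r₁ := by
          have hs' : s = r₁ ^ 2 - p ^ 2 := by rw [hs_def, hp2, hp_def]
          nlinarith
        have hqr : q < r₂ := by
          have ht' : t = r₂ ^ 2 - q ^ 2 := by rw [ht_def, hq2, hq_def]
          nlinarith
        rcases lt_or_gt_of_ne hst_ne with hlt | hgt
        · -- s < t : |t - s| = t - s, get q = p + d
          have hab : |t - s| = t - s := abs_of_pos (by linarith)
          rw [hab] at habs2 habs3
          have hqpd : q = p + d := by
            have : (t - s) * q - (t - s) * p = t * d - s * d := by
              rw [← habs2, ← habs3]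
            have hts : 0 < t - s := by linarith
            nlinarith [this]
          exact aux_contra r₂ r₁ d q p (by rw [abs_sub_comm]; exact h) hp_pos
            hqpd hqr hpr (by linear_combination (-1 : ℝ) * hrel + p * q * hqpd)
        · -- s > t : |t - s| = s - t, get p = q + d
          have hab : |t - s| = s - t := by
            rw [abs_sub_comm]; exact abs_of_pos (by linarith)
          rw [hab] at habs2 habs3
          have hpqd : p = q + d := by
            have : (s - t) * p - (s - t) * q = s * d - t * d := by
              rw [← habs2, ← habs3]
            have hts : 0 < s - t := by linarith
            nlinarith [this]
          exact aux_contra r₁ r₂ d p q h hq_pos hpqd hpr hqr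
            (by linear_combination hrel + p * q * hpqd)
      obtain ⟨hs, ht⟩ := hst
      have hw : w = (starRingEnd ℂ) z := by
        rw [hs] at e1
        simp only [Complex.ofReal_zero] at e1
        rcases mul_eq_zero.mp e1 with h' | h'
        · exact absurd h' hz1
        · exact sub_eq_zero.mp h'
      have ha1 : ‖z - c₁‖ = r₁ := by
        have h1' : ‖z - c₁‖ ^ 2 = r₁ ^ 2 := by
          rw [← hp2]; linarith [hs_def ▸ hs]
        nlinarith [norm_nonneg (z - c₁), sq_nonneg (‖z - c₁‖ - r₁)]
      have ha2 : ‖z - c₂‖ = r₂ := by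
        have h2' : ‖z - c₂‖ ^ 2 = r₂ ^ 2 := by
          rw [← hq2]; linarith [ht_def ▸ ht]
        nlinarith [norm_nonneg (z - c₂), sq_nonneg (‖z - c₂‖ - r₂)]
      exact ⟨z, by rw [hw], ha1, ha2⟩
    · rintro ⟨z', hpz, ha1, ha2⟩
      simp only [Prod.mk.injEq] at hpz
      obtain ⟨rfl, rfl⟩ := hpz
      have m1 : (z - c₁) * ((starRingEnd ℂ) z - (starRingEnd ℂ) c₁)
          = (r₁ : ℂ) ^ 2 := by
        rw [← map_sub, Complex.mul_conj, ← Complex.sq_norm, ha1]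
        push_cast; ring
      have m2 : (z - c₂) * ((starRingEnd ℂ) z - (starRingEnd ℂ) c₂)
          = (r₂ : ℂ) ^ 2 := by
        rw [← map_sub, Complex.mul_conj, ← Complex.sq_norm, ha2]
        push_cast; ring
      exact ⟨⟨m1, le_of_eq ha1⟩, ⟨m2, le_of_eq ha2⟩⟩
  refine ⟨key, ?_⟩
  rw [key]
  rintro ⟨z, w⟩ ⟨z', hpz, _, _⟩
  obtain ⟨hz, hw⟩ := Prod.ext_iff.mp hpz
  simp only [Set.mem_setOf_eq]
  simp at hz hw
  rw [hz, hw]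
end

section
/- Let c₁, c₂ ∈ ℂ and r₁, r₂ > 0, and suppose |c₁ − c₂| > |r₁ − r₂| and (c₁, r₁) ≠ (c₂, r₂). For j = 1,2 define X_j = {(z,w) ∈ ℂ² : (z − c_j)(w − conj(c_j)) = r_j², |z − c_j| ≤ r_j}. Then the set X₁ ∩ X₂ has at most two elements. -/
lemma quad_roots_encard_le (a b c : ℂ) (h : ¬(a = 0 ∧ b = 0 ∧ c = 0)) :
    {z : ℂ | a * z ^ 2 + b * z + c = 0}.encard ≤ 2 := by
  by_cases ha : a = 0
  · by_cases hb : b = 0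
    · have hc : c ≠ 0 := by tauto
      have he : {z : ℂ | a * z ^ 2 + b * z + c = 0} = ∅ := by
        ext z; simp [ha, hb, hc]
      simp [he]
    · have hsub : {z : ℂ | a * z ^ 2 + b * z + c = 0} ⊆ {-c / b} := by
        intro z hz
        simp only [Set.mem_setOf_eq, ha, zero_mul, zero_add] at hz
        simp only [Set.mem_singleton_iff]
        field_simp
        linear_combination hz
      calc {z : ℂ | a * z ^ 2 + b * z + c = 0}.encard
          ≤ ({-c / b} : Set ℂ).encard := Set.encard_le_encard hsub
        _ = 1 := Set.encard_singleton _
        _ ≤ 2 := by norm_num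
  · obtain ⟨s, hs⟩ := IsAlgClosed.exists_pow_nat_eq (discrim a b c) (n := 2) (by norm_num)
    have hdisc : discrim a b c = s * s := by rw [← hs]; ring
    have hsub : {z : ℂ | a * z ^ 2 + b * z + c = 0} ⊆
        {(-b + s) / (2 * a), (-b - s) / (2 * a)} := by
      intro z hz
      simp only [Set.mem_setOf_eq] at hz
      rcases (quadratic_eq_zero_iff ha hdisc z).1 (by linear_combination hz) with h1 | h2
      · exact Or.inl h1
      · exact Or.inr h2
    calc {z : ℂ | a * z ^ 2 + b * z + c = 0}.encard
        ≤ ({(-b + s) / (2 * a), (-b - s) / (2 * a)} : Set ℂ).encard :=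
          Set.encard_le_encard hsub
      _ ≤ ({(-b - s) / (2 * a)} : Set ℂ).encard + 1 := Set.encard_insert_le _ _
      _ ≤ 2 := by rw [Set.encard_singleton]; norm_num

/-- Case 2 of Lemma 1: the complexifications of two distinct circles, neither
contained in the closed disc bounded by the other, meet in at most two points. -/
theorem complexified_circles_intersection_encard
    (c₁ c₂ : ℂ) (r₁ r₂ : ℝ) (hr₁ : 0 < r₁) (hr₂ : 0 < r₂)
    (hne : (c₁, r₁) ≠ (c₂, r₂))
    (h : ‖c₁ - c₂‖ > |r₁ - r₂|)
    (X₁ X₂ : Set (ℂ × ℂ))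
    (hX₁ : X₁ = {p : ℂ × ℂ |
      (p.1 - c₁) * (p.2 - (starRingEnd ℂ) c₁) = (r₁ : ℂ) ^ 2 ∧
      ‖p.1 - c₁‖ ≤ r₁})
    (hX₂ : X₂ = {p : ℂ × ℂ |
      (p.1 - c₂) * (p.2 - (starRingEnd ℂ) c₂) = (r₂ : ℂ) ^ 2 ∧
      ‖p.1 - c₂‖ ≤ r₂}) :
    (X₁ ∩ X₂).encard ≤ 2 := by
  subst hX₁ hX₂
  set a : ℂ := (starRingEnd ℂ) c₁ - (starRingEnd ℂ) c₂ with ha_def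
  set b : ℂ := (r₁ : ℂ) ^ 2 - (r₂ : ℂ) ^ 2 - a * (c₁ + c₂) with hb_def
  set cc : ℂ := a * c₁ * c₂ - (r₁ : ℂ) ^ 2 * c₂ + (r₂ : ℂ) ^ 2 * c₁ with hcc_def
  have hcoef : ¬(a = 0 ∧ b = 0 ∧ cc = 0) := by
    rintro ⟨ha0, hb0, _⟩
    have hc12 : c₁ = c₂ := by
      have := sub_eq_zero.mp ha0
      exact star_injective this
    have hr : (r₁ : ℂ) ^ 2 = (r₂ : ℂ) ^ 2 := by
      have h0 : (r₁ : ℂ) ^ 2 - (r₂ : ℂ) ^ 2 = 0 := by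
        rw [hb_def, ha0] at hb0; linear_combination hb0
      exact sub_eq_zero.mp h0
    have hrr : r₁ ^ 2 = r₂ ^ 2 := by exact_mod_cast hr
    have hr12 : r₁ = r₂ := by nlinarith
    exact hne (by rw [hc12, hr12])
  have hsub : {p : ℂ × ℂ |
      (p.1 - c₁) * (p.2 - (starRingEnd ℂ) c₁) = (r₁ : ℂ) ^ 2 ∧
      ‖p.1 - c₁‖ ≤ r₁} ∩ {p : ℂ × ℂ |
      (p.1 - c₂) * (p.2 - (starRingEnd ℂ) c₂) = (r₂ : ℂ) ^ 2 ∧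
      ‖p.1 - c₂‖ ≤ r₂} ⊆
      (fun z => (z, (starRingEnd ℂ) c₁ + (r₁ : ℂ) ^ 2 / (z - c₁))) ''
        {z : ℂ | a * z ^ 2 + b * z + cc = 0} := by
    rintro ⟨z, w⟩ ⟨⟨e1, _⟩, ⟨e2, _⟩⟩
    simp only [Set.mem_setOf_eq] at e1 e2
    have hz1 : z - c₁ ≠ 0 := by
      intro h0
      rw [h0, zero_mul] at e1
      have : (r₁ : ℂ) ≠ 0 := by exact_mod_cast hr₁.ne'
      exact this (by simpa [pow_eq_zero_iff] using e1.symm)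
    refine ⟨z, ?_, ?_⟩
    · simp only [Set.mem_setOf_eq, ha_def, hb_def, hcc_def]
      linear_combination (z - c₁) * e2 - (z - c₂) * e1
    · have hw : w = (starRingEnd ℂ) c₁ + (r₁ : ℂ) ^ 2 / (z - c₁) := by
        field_simp
        linear_combination e1
      simp [hw]
  calc _ ≤ ((fun z => (z, (starRingEnd ℂ) c₁ + (r₁ : ℂ) ^ 2 / (z - c₁))) ''
        {z : ℂ | a * z ^ 2 + b * z + cc = 0}).encard := Set.encard_le_encard hsub
    _ ≤ ({z : ℂ | a * z ^ 2 + b * z + cc = 0}).encard := Set.encard_image_le _ _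
    _ ≤ 2 := quad_roots_encard_le a b cc hcoef
end

section
/- Let c₁, c₂ ∈ ℂ and r₁, r₂ > 0 with (c₁, r₁) ≠ (c₂, r₂) and |c₁ − c₂| > |r₁ − r₂|. Let z ∈ ℂ satisfy |z − c₁| < r₁ and |z − c₂| < r₂. Then conj(c₁) + r₁²/(z − c₁) ≠ conj(c₂) + r₂²/(z − c₂). -/
private lemma gamma_aux (r₁ r₂ t s : ℝ) (hr₁ : 0 < r₁) (hr₂ : 0 < r₂) (ht : 0 < t)
    (hs : 0 < s) (hs₁ : s < r₁) (hts : t * s < r₂)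
    (hstar' : r₂^2 - t^2 * s^2 = t * (r₁^2 - s^2)) :
    |t - 1| * s ≤ |r₁ - r₂| := by
  have hAB : 0 < (1 + t) * r₁^2 - (1 - t) * s^2 := by
    nlinarith [mul_pos ht (mul_pos hs hs), mul_nonneg (by linarith : (0:ℝ) ≤ 1 + t)
      (by nlinarith : (0:ℝ) ≤ r₁^2 - s^2)]
  have hsq2 : ((1 + t) * r₁^2 - (1 - t) * s^2)^2 =
      4 * r₁^2 * r₂^2 + ((1 - t) * (r₁^2 - s^2))^2 := by
    linear_combination (-4 * r₁^2) * hstar'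
  have h2r : 2 * (r₁ * r₂) ≤ (1 + t) * r₁^2 - (1 - t) * s^2 := by
    nlinarith [hsq2, hAB, mul_pos hr₁ hr₂, sq_nonneg ((1 - t) * (r₁^2 - s^2))]
  have hfin : (t - 1)^2 * s^2 ≤ (r₁ - r₂)^2 := by nlinarith [h2r, hstar']
  have h1 : |t - 1| * s = |( t - 1) * s| := by
    rw [abs_mul, abs_of_pos hs]
  rw [h1, ← Real.sqrt_sq_eq_abs, ← Real.sqrt_sq_eq_abs]
  apply Real.sqrt_le_sqrt
  nlinarith [hfin]


/-- Pointwise form of Lemma 1: for `z` interior to two distinct circles,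
neither contained in the closed disc bounded by the other, the corresponding
points of the curve `Γ_z` are distinct. -/
theorem gamma_points_distinct
    (c₁ c₂ : ℂ) (r₁ r₂ : ℝ) (hr₁ : 0 < r₁) (hr₂ : 0 < r₂)
    (hne : (c₁, r₁) ≠ (c₂, r₂))
    (h : ‖c₁ - c₂‖ > |r₁ - r₂|)
    (z : ℂ) (hz₁ : ‖z - c₁‖ < r₁) (hz₂ : ‖z - c₂‖ < r₂) :
    (starRingEnd ℂ) c₁ + (r₁ : ℂ) ^ 2 / (z - c₁) ≠
      (starRingEnd ℂ) c₂ + (r₂ : ℂ) ^ 2 / (z - c₂) := by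
  intro heq
  have hcc : c₁ ≠ c₂ := by
    intro h'
    rw [h'] at h
    simp at h
    exact absurd h (not_lt.2 (abs_nonneg _))
  by_cases ha : z - c₁ = 0
  · -- z = c₁
    have hz : z = c₁ := sub_eq_zero.mp ha
    have hb : z - c₂ ≠ 0 := by rw [hz]; exact sub_ne_zero.mpr hcc
    rw [ha] at heq
    simp only [div_zero, add_zero] at heq
    have hzc : (starRingEnd ℂ) z = (starRingEnd ℂ) c₁ := by rw [hz]
    have key : (starRingEnd ℂ) (z - c₂) * (z - c₂) = (r₂:ℂ)^2 := by
      rw [map_sub]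
      field_simp at heq
      linear_combination heq + (z - c₂) * hzc
    have habs := congrArg (‖·‖) key
    rw [norm_mul, Complex.norm_conj] at habs
    have h4 : ‖((r₂:ℂ)^2)‖ = r₂^2 := by
      rw [norm_pow, Complex.norm_real, Real.norm_eq_abs, abs_of_pos hr₂]
    rw [h4] at habs
    nlinarith [norm_nonneg (z - c₂)]
  · by_cases hb : z - c₂ = 0
    · have hz : z = c₂ := sub_eq_zero.mp hb
      rw [hb] at heq
      simp only [div_zero, add_zero] at heq
      have hzc : (starRingEnd ℂ) z = (starRingEnd ℂ) c₂ := by rw [hz]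
      have key : (starRingEnd ℂ) (z - c₁) * (z - c₁) = (r₁:ℂ)^2 := by
        rw [map_sub]
        field_simp at heq
        linear_combination -heq + (z - c₁) * hzc
      have habs := congrArg (‖·‖) key
      rw [norm_mul, Complex.norm_conj] at habs
      have h4 : ‖((r₁:ℂ)^2)‖ = r₁^2 := by
        rw [norm_pow, Complex.norm_real, Real.norm_eq_abs, abs_of_pos hr₁]
      rw [h4] at habs
      nlinarith [norm_nonneg (z - c₁)]
    · have h1 : (starRingEnd ℂ) (z - c₁) * (z - c₁) = (Complex.normSq (z - c₁) : ℂ) := by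
        rw [mul_comm]; exact Complex.mul_conj _
      have h2 : (starRingEnd ℂ) (z - c₂) * (z - c₂) = (Complex.normSq (z - c₂) : ℂ) := by
        rw [mul_comm]; exact Complex.mul_conj _
      have hA : (starRingEnd ℂ) (z - c₁) = (starRingEnd ℂ) z - (starRingEnd ℂ) c₁ :=
        map_sub _ _ _
      have hB : (starRingEnd ℂ) (z - c₂) = (starRingEnd ℂ) z - (starRingEnd ℂ) c₂ :=
        map_sub _ _ _
      have keyC : (z - c₁) * ((Complex.normSq (z - c₂) : ℂ) - (r₂:ℂ)^2) =
          (z - c₂) * ((Complex.normSq (z - c₁) : ℂ) - (r₁:ℂ)^2) := by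
        field_simp at heq
        linear_combination heq + (z - c₂) * h1 - (z - c₁) * h2 +
          (z - c₁) * (z - c₂) * (hB - hA)
      have hp : 0 < r₁^2 - Complex.normSq (z - c₁) := by
        have := Complex.sq_norm (z - c₁)
        nlinarith [norm_nonneg (z - c₁)]
      have hq : 0 < r₂^2 - Complex.normSq (z - c₂) := by
        have := Complex.sq_norm (z - c₂)
        nlinarith [norm_nonneg (z - c₂)]
      have hpne : ((r₁^2 - Complex.normSq (z - c₁) : ℝ) : ℂ) ≠ 0 :=
        Complex.ofReal_ne_zero.mpr hp.ne'
      have hbeqR : ((r₁^2 - Complex.normSq (z - c₁) : ℝ) : ℂ) * (z - c₂) =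
          ((r₂^2 - Complex.normSq (z - c₂) : ℝ) : ℂ) * (z - c₁) := by
        push_cast
        linear_combination keyC
      obtain ⟨t, ht, hbeq⟩ : ∃ t : ℝ, 0 < t ∧ z - c₂ = (t : ℂ) * (z - c₁) := by
        refine ⟨(r₂^2 - Complex.normSq (z - c₂)) / (r₁^2 - Complex.normSq (z - c₁)),
          div_pos hq hp, ?_⟩
        rw [Complex.ofReal_div, div_mul_eq_mul_div, eq_div_iff hpne]
        linear_combination hbeqR
      have hstar0 : (Complex.normSq (z - c₂) : ℂ) - (r₂:ℂ)^2 =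
          (t : ℂ) * ((Complex.normSq (z - c₁) : ℂ) - (r₁:ℂ)^2) := by
        apply mul_left_cancel₀ ha
        linear_combination keyC + ((Complex.normSq (z - c₁) : ℂ) - (r₁:ℂ)^2) * hbeq
      have hstar : Complex.normSq (z - c₂) - r₂^2 = t * (Complex.normSq (z - c₁) - r₁^2) := by
        exact_mod_cast hstar0
      set s : ℝ := ‖z - c₁‖ with hs_def
      have hs : 0 < s := norm_pos_iff.mpr ha
      have hα : Complex.normSq (z - c₁) = s^2 := (Complex.sq_norm _).symm
      have habsb : ‖z - c₂‖ = t * s := by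
        rw [hbeq, norm_mul, Complex.norm_real, Real.norm_eq_abs, abs_of_pos ht]
      have hβ : Complex.normSq (z - c₂) = t^2 * s^2 := by
        rw [← Complex.sq_norm, habsb]; ring
      have hstar' : r₂^2 - t^2 * s^2 = t * (r₁^2 - s^2) := by
        rw [hα, hβ] at hstar; linarith [mul_comm t (s^2 - r₁^2)]
      have hs₁ : s < r₁ := hz₁
      have hts : t * s < r₂ := by rw [← habsb]; exact hz₂
      have hcd : ‖c₁ - c₂‖ = |t - 1| * s := by
        have hcc2 : c₁ - c₂ = ((t - 1 : ℝ) : ℂ) * (z - c₁) := by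
          push_cast
          linear_combination hbeq
        rw [hcc2, norm_mul, Complex.norm_real, Real.norm_eq_abs]
      rw [hcd] at h
      exact absurd h (not_lt.2 (gamma_aux r₁ r₂ t s hr₁ hr₂ ht hs hs₁ hts hstar'))
end
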